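/- arXiv:2605.06802 — 5 statements merged into one kernel-verified Lean document; each statement's English description precedes it below -/
import Mathlib

section
/- For any positive integer-valued random variable L with finite mean μ = E[L] > 1, the Shannon entropy of L satisfies H(L) ≤ μ·log μ − (μ−1)·log(μ−1), where log is base 2. -/
/-- For any positive integer-valued random variable `L` (pmf `p` on `ℕ` with `p 0 = 0`)
with finite mean `μ = ∑' l, l * p l > 1`, the Shannon entropy (base 2) satisfies
`H(L) ≤ μ·log₂ μ − (μ−1)·log₂(μ−1)`. -/
theorem stmt_0 (p : ℕ → ℝ) (hp : ∀ l, 0 ≤ p l) (hp0 : p 0 = 0)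
    (hpsum : Summable p) (hsum1 : ∑' l, p l = 1)
    (hmean : Summable (fun l : ℕ => (l : ℝ) * p l))
    (hent : Summable (fun l => p l * Real.logb 2 (p l)))
    (hμ : 1 < ∑' l : ℕ, (l : ℝ) * p l) :
    -∑' l, p l * Real.logb 2 (p l) ≤
      (∑' l : ℕ, (l : ℝ) * p l) * Real.logb 2 (∑' l : ℕ, (l : ℝ) * p l)
        - ((∑' l : ℕ, (l : ℝ) * p l) - 1) * Real.logb 2 ((∑' l : ℕ, (l : ℝ) * p l) - 1) := by
  set μ := ∑' l : ℕ, (l : ℝ) * p l with hμdef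
  have hμ1 : 1 < μ := hμ
  have hμ0 : 0 < μ := lt_trans one_pos hμ1
  have hm1 : 0 < μ - 1 := by linarith
  set r : ℝ := (μ - 1) / μ with hrdef
  have hr0 : 0 < r := div_pos hm1 hμ0
  have hr1 : r < 1 := (div_lt_one hμ0).2 (by linarith)
  set c : ℝ := (μ - 1)⁻¹ with hcdef
  have hc0 : 0 < c := inv_pos.2 hm1
  set q : ℕ → ℝ := fun l => if l = 0 then 0 else c * r ^ l with hqdef
  have hq0 : ∀ l, 0 ≤ q l := by
    intro l
    simp only [hqdef]
    split
    · exact le_refl 0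
    · positivity
  have hqle : ∀ l, q l ≤ c * r ^ l := by
    intro l
    simp only [hqdef]
    split
    · positivity
    · exact le_refl _
  have hgeo : Summable (fun l : ℕ => c * r ^ l) :=
    (summable_geometric_of_lt_one hr0.le hr1).mul_left c
  have hqsum : Summable q := hgeo.of_nonneg_of_le hq0 hqle
  have hqtsum : ∑' l, q l = 1 := by
    rw [Summable.tsum_eq_zero_add hqsum]
    have h1 : (fun l : ℕ => q (l + 1)) = fun l : ℕ => (c * r) * r ^ l := by
      funext l
      simp only [hqdef, Nat.succ_ne_zero, if_false, pow_succ]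
      ring
    rw [h1, tsum_mul_left, tsum_geometric_of_lt_one hr0.le hr1]
    simp only [hqdef, if_true]
    rw [hcdef, hrdef]
    have h2 : 1 - (μ - 1) / μ = 1 / μ := by field_simp; ring
    rw [h2]
    field_simp
    norm_num
  -- the value of the cross term p * logb 2 (q l)
  have hqform : ∀ l : ℕ, p l * Real.logb 2 (q l) =
      Real.logb 2 r * ((l : ℝ) * p l) + (-Real.logb 2 (μ - 1)) * p l := by
    intro l
    rcases Nat.eq_zero_or_pos l with h | h
    · subst h; simp [hp0]
    · have hl0 : l ≠ 0 := Nat.pos_iff_ne_zero.mp h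
      simp only [hqdef, hl0, if_false]
      rw [Real.logb_mul (ne_of_gt hc0) (ne_of_gt (pow_pos hr0 l)), Real.logb_pow,
        hcdef, Real.logb_inv]
      ring
  have hcross_sum : Summable (fun l => p l * Real.logb 2 (q l)) := by
    have : (fun l => p l * Real.logb 2 (q l)) =
        fun l : ℕ => Real.logb 2 r * ((l : ℝ) * p l) + (-Real.logb 2 (μ - 1)) * p l := by
      funext l; exact hqform l
    rw [this]
    exact (hmean.mul_left _).add (hpsum.mul_left _)
  have hcross : ∑' l, p l * Real.logb 2 (q l) =
      Real.logb 2 r * μ + (-Real.logb 2 (μ - 1)) := by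
    have h1 : ∑' l, p l * Real.logb 2 (q l) =
        ∑' l : ℕ, (Real.logb 2 r * ((l : ℝ) * p l) + (-Real.logb 2 (μ - 1)) * p l) := by
      congr 1; funext l; exact hqform l
    rw [h1, Summable.tsum_add (hmean.mul_left _) (hpsum.mul_left _), tsum_mul_left, tsum_mul_left,
      hsum1, ← hμdef]
    ring
  -- Gibbs pointwise
  have hlog2 : 0 < Real.log 2 := Real.log_pos one_lt_two
  have hgibbs : ∀ l, p l * Real.logb 2 (q l) - p l * Real.logb 2 (p l) ≤
      (q l - p l) / Real.log 2 := by
    intro l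
    rcases eq_or_lt_of_le (hp l) with h | hpl
    · rw [← h]
      simp only [zero_mul, sub_zero, sub_self]
      have : (0:ℝ) - 0 ≤ (q l - 0) / Real.log 2 := by
        rw [sub_zero, sub_zero]
        positivity
      simpa using this
    · have hl0 : l ≠ 0 := by
        intro h0; rw [h0, hp0] at hpl; exact lt_irrefl 0 hpl
      have hql : 0 < q l := by
        simp only [hqdef, hl0, if_false]; positivity
      have h2 : Real.log (q l) - Real.log (p l) ≤ q l / p l - 1 := by
        rw [← Real.log_div hql.ne' hpl.ne']
        exact Real.log_le_sub_one_of_pos (div_pos hql hpl)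
      have h3 : p l * (Real.log (q l) - Real.log (p l)) ≤ q l - p l := by
        have h4 := mul_le_mul_of_nonneg_left h2 hpl.le
        have h5 : p l * (q l / p l - 1) = q l - p l := by field_simp
        linarith [h4, h5.le, h5.ge]
      simp only [Real.logb]
      have h6 : p l * (Real.log (q l) / Real.log 2) - p l * (Real.log (p l) / Real.log 2)
          = (p l * (Real.log (q l) - Real.log (p l))) / Real.log 2 := by ring
      rw [h6]
      gcongr
  have hsumLHS : Summable (fun l => p l * Real.logb 2 (q l) - p l * Real.logb 2 (p l)) :=
    hcross_sum.sub hent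
  have hsumRHS : Summable (fun l => (q l - p l) / Real.log 2) :=
    (hqsum.sub hpsum).div_const _
  have hGibbs : ∑' l, (p l * Real.logb 2 (q l) - p l * Real.logb 2 (p l)) ≤
      ∑' l, (q l - p l) / Real.log 2 :=
    Summable.tsum_le_tsum hgibbs hsumLHS hsumRHS
  have hRHS0 : ∑' l, (q l - p l) / Real.log 2 = 0 := by
    rw [tsum_div_const, Summable.tsum_sub hqsum hpsum, hqtsum, hsum1, sub_self, zero_div]
  have hLHS : ∑' l, (p l * Real.logb 2 (q l) - p l * Real.logb 2 (p l)) =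
      (∑' l, p l * Real.logb 2 (q l)) - ∑' l, p l * Real.logb 2 (p l) :=
    Summable.tsum_sub hcross_sum hent
  have hlogr : Real.logb 2 r = Real.logb 2 (μ - 1) - Real.logb 2 μ := by
    rw [hrdef, Real.logb_div hm1.ne' hμ0.ne']
  rw [hRHS0, hLHS, hcross, hlogr] at hGibbs
  nlinarith [hGibbs]
end

section
/- For any positive integer-valued random variable L with finite mean μ = E[L], the Shannon entropy satisfies H(L) < log₂(e·μ), i.e., H(L) < log₂ μ + log₂ e. -/
/-- For any positive integer-valued random variable `L` (pmf `p` on `ℕ` with `p 0 = 0`)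
with finite mean `μ = ∑' l, l * p l`, the Shannon entropy (base 2) satisfies
`H(L) < log₂ (e · μ)`. -/
theorem stmt_1 (p : ℕ → ℝ) (hp : ∀ l, 0 ≤ p l) (hp0 : p 0 = 0)
    (hpsum : Summable p) (hsum1 : ∑' l, p l = 1)
    (hmean : Summable (fun l : ℕ => (l : ℝ) * p l))
    (hent : Summable (fun l => p l * Real.logb 2 (p l))) :
    -∑' l, p l * Real.logb 2 (p l) <
      Real.logb 2 (Real.exp 1 * ∑' l : ℕ, (l : ℝ) * p l) := by
  have hlog2 : (0:ℝ) < Real.log 2 := Real.log_pos (by norm_num)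
  set μ := ∑' l : ℕ, (l : ℝ) * p l with hμdef
  have hple : ∀ l : ℕ, p l ≤ (l : ℝ) * p l := by
    intro l
    cases l with
    | zero => simp [hp0]
    | succ n =>
      have h1 := hp (n + 1)
      have h2 : (1:ℝ) ≤ ((n+1 : ℕ) : ℝ) := by exact_mod_cast Nat.one_le_iff_ne_zero.mpr (Nat.succ_ne_zero n)
      nlinarith
  have hμ1 : 1 ≤ μ := hsum1 ▸ Summable.tsum_le_tsum hple hpsum hmean
  have hμ0 : (0:ℝ) < μ := lt_of_lt_of_le one_pos hμ1
  have hAsum : Summable (fun l => p l * Real.log (p l)) := by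
    have h := hent.mul_right (Real.log 2)
    refine h.congr fun l => ?_
    rw [Real.logb]
    field_simp
  have htsum : ∑' l, p l * Real.logb 2 (p l) = (∑' l, p l * Real.log (p l)) / Real.log 2 := by
    rw [← tsum_div_const]
    exact tsum_congr fun l => by rw [Real.logb, mul_div_assoc]
  rw [htsum, show Real.logb 2 (Real.exp 1 * μ) = (1 + Real.log μ) / Real.log 2 from by
      rw [Real.logb, Real.log_mul (Real.exp_ne_zero 1) (ne_of_gt hμ0), Real.log_exp]]
  rw [neg_div' ]
  rw [div_lt_div_iff_of_pos_right hlog2]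
  -- Goal: -(∑' l, p l * Real.log (p l)) < 1 + Real.log μ
  rcases eq_or_lt_of_le hμ1 with h1 | h1
  · -- μ = 1 : degenerate case
    have hzero : ∀ l : ℕ, 2 ≤ l → p l = 0 := by
      intro l hl
      by_contra hne
      have hpl : 0 < p l := (hp l).lt_of_ne (Ne.symm hne)
      have hsub : Summable (fun l : ℕ => (l:ℝ) * p l - p l) := hmean.sub hpsum
      have hts : ∑' l : ℕ, ((l:ℝ) * p l - p l) = 0 := by
        rw [Summable.tsum_sub hmean hpsum, hsum1, ← hμdef, ← h1]
        ring
      have hterm : (l:ℝ) * p l - p l ≤ 0 := by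
        have := Summable.le_tsum hsub l (fun j _ => by linarith [hple j])
        rw [hts] at this
        linarith
      have h2l : (2:ℝ) ≤ (l:ℝ) := by exact_mod_cast hl
      nlinarith
    have hp1 : p 1 = 1 := by
      rw [← hsum1]
      refine (tsum_eq_single 1 fun b hb => ?_).symm
      match b, hb with
      | 0, _ => exact hp0
      | (n+2), _ => exact hzero (n+2) (by omega)
    have hT : ∑' l, p l * Real.log (p l) = 0 := by
      rw [show (fun l => p l * Real.log (p l)) = fun _ => (0:ℝ) from ?_, tsum_zero]
      funext l
      match l with
      | 0 => simp [hp0]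
      | 1 => simp [hp1]
      | (n+2) => simp [hzero (n+2) (by omega)]
    rw [hT, ← h1]
    simp
  · -- 1 < μ
    set s : ℝ := 1 - 1/μ with hs
    have hs0 : 0 < s := by
      have : 1/μ < 1 := by rw [div_lt_one hμ0]; exact h1
      simp only [hs]; linarith
    have hs1 : s < 1 := by
      have : 0 < 1/μ := by positivity
      simp only [hs]; linarith
    set q : ℕ → ℝ := fun l => if l = 0 then 0 else μ⁻¹ * s^(l-1) with hq
    have hq0 : ∀ l, 0 ≤ q l := by
      intro l; simp only [hq]; split
      · exact le_rfl
      · positivity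
    have hqshift : Summable (fun n : ℕ => q (n+1)) := by
      refine ((summable_geometric_of_lt_one hs0.le hs1).mul_left μ⁻¹).congr fun n => ?_
      simp [hq]
    have hqsummable : Summable q := (summable_nat_add_iff 1).mp hqshift
    have hqsum : ∑' l, q l = 1 := by
      rw [Summable.tsum_eq_zero_add hqsummable]
      have : ∑' n : ℕ, q (n+1) = μ⁻¹ * (1 - s)⁻¹ := by
        rw [← tsum_geometric_of_lt_one hs0.le hs1, ← tsum_mul_left]
        exact tsum_congr fun n => by simp [hq]
      rw [this]
      simp only [hq, if_pos rfl, hs]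
      rw [show (1:ℝ) - (1 - 1/μ) = 1/μ by ring]
      field_simp
      ring
    have hkey : ∀ l, -(p l * Real.log (p l)) ≤ -(p l * Real.log (q l)) + (q l - p l) := by
      intro l
      rcases eq_or_lt_of_le (hp l) with hpl | hpl
      · simp [← hpl, hq0 l]
      · have hl : l ≠ 0 := by rintro rfl; rw [hp0] at hpl; exact lt_irrefl 0 hpl
        have hql : 0 < q l := by
          simp only [hq, if_neg hl]; positivity
        have hlog := Real.log_le_sub_one_of_pos (show 0 < q l / p l from div_pos hql hpl)
        rw [Real.log_div (ne_of_gt hql) (ne_of_gt hpl)] at hlog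
        have h2 : p l * (Real.log (q l) - Real.log (p l)) ≤ p l * (q l / p l - 1) :=
          mul_le_mul_of_nonneg_left hlog hpl.le
        have h3 : p l * (q l / p l) = q l := by field_simp
        nlinarith
    have hBeq : ∀ l, p l * Real.log (q l) =
        (-Real.log μ) * p l + Real.log s * ((l:ℝ) * p l - p l) := by
      intro l
      cases l with
      | zero => simp [hp0]
      | succ n =>
        have hqv : q (n+1) = μ⁻¹ * s^n := by simp [hq]
        rw [hqv, Real.log_mul (by positivity) (by positivity), Real.log_inv, Real.log_pow]
        push_cast
        ring
    have hBsummable : Summable (fun l => p l * Real.log (q l)) :=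
      Summable.congr ((hpsum.mul_left _).add ((hmean.sub hpsum).mul_left _))
        (fun l => (hBeq l).symm)
    have hBsum : ∑' l, p l * Real.log (q l) = -Real.log μ + Real.log s * (μ - 1) := by
      rw [tsum_congr hBeq, Summable.tsum_add (hpsum.mul_left _) ((hmean.sub hpsum).mul_left _),
        tsum_mul_left, tsum_mul_left, hsum1, Summable.tsum_sub hmean hpsum, hsum1, ← hμdef]
      ring
    have hmain : -(∑' l, p l * Real.log (p l)) ≤
        -(∑' l, p l * Real.log (q l)) + (1 - 1) := by
      have hRsum : Summable (fun l => -(p l * Real.log (q l)) + (q l - p l)) :=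
        hBsummable.neg.add (hqsummable.sub hpsum)
      calc -(∑' l, p l * Real.log (p l)) = ∑' l, -(p l * Real.log (p l)) := by
            rw [tsum_neg]
        _ ≤ ∑' l, (-(p l * Real.log (q l)) + (q l - p l)) :=
            Summable.tsum_le_tsum hkey hAsum.neg hRsum
        _ = -(∑' l, p l * Real.log (q l)) + (1 - 1) := by
            rw [Summable.tsum_add hBsummable.neg (hqsummable.sub hpsum), tsum_neg,
              Summable.tsum_sub hqsummable hpsum, hqsum, hsum1]
    have hstrict : -Real.log s * (μ - 1) < 1 := by
      have hsne : s⁻¹ ≠ 1 := by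
        intro h
        have : s = 1 := by field_simp at h; linarith [h]
        linarith
      have h1s := Real.log_lt_sub_one_of_pos (show (0:ℝ) < s⁻¹ by positivity) hsne
      rw [Real.log_inv] at h1s
      have hμm0 : (μ:ℝ) - 1 ≠ 0 := by intro h; nlinarith
      have hinv : s⁻¹ - 1 = 1/(μ-1) := by
        rw [hs, show (1:ℝ) - 1/μ = (μ-1)/μ from by field_simp, inv_div]
        field_simp
        ring
      rw [hinv] at h1s
      have hμm : 0 < μ - 1 := by linarith
      calc -Real.log s * (μ - 1) < (1/(μ-1)) * (μ-1) :=
            mul_lt_mul_of_pos_right h1s hμm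
        _ = 1 := by field_simp
    rw [hBsum] at hmain
    -- hmain : -T ≤ -(-log μ + log s (μ-1)) + 0 = log μ - log s (μ-1)
    nlinarith [hmain, hstrict]
end

section
/- Let X be a finite alphabet, let X₁,...,Xₙ be i.i.d. with distribution p_X on X, and let Φ : X^n → {0,1}* be an injective binary encoding. Then the expected codeword length satisfies E[|Φ(X^n)|] ≥ n·H(X) − log₂ n − log₂(e·log₂|X|), provided E[|Φ(X^n)|] < n·log₂|X| (and the bound holds trivially otherwise since n·log₂|X| ≥ n·H(X)). -/
open Real Finset

lemma gibbs_aux {α : Type*} [Fintype α] (q r : α → ℝ) (hq : ∀ a, 0 ≤ q a)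
    (hr : ∀ a, 0 < r a) (hq1 : ∑ a, q a = 1) (hr1 : ∑ a, r a ≤ 1) :
    -∑ a, q a * Real.logb 2 (q a) ≤ -∑ a, q a * Real.logb 2 (r a) := by
  have hlog2 : (0:ℝ) < Real.log 2 := Real.log_pos one_lt_two
  have key : ∀ a, q a * Real.logb 2 (r a) - q a * Real.logb 2 (q a)
      ≤ (r a - q a) / Real.log 2 := by
    intro a
    have hra := hr a
    rcases eq_or_lt_of_le (hq a) with h | h
    · rw [← h]
      simp only [zero_mul, sub_zero, zero_sub, neg_zero, sub_zero]
      positivity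
    · have h1 : q a * Real.logb 2 (r a) - q a * Real.logb 2 (q a)
          = q a * (Real.log (r a / q a) / Real.log 2) := by
        rw [Real.log_div (ne_of_gt hra) (ne_of_gt h)]
        unfold Real.logb; ring
      rw [h1]
      have h2 : Real.log (r a / q a) ≤ r a / q a - 1 :=
        Real.log_le_sub_one_of_pos (by positivity)
      rw [mul_div_assoc' , div_le_div_iff_of_pos_right hlog2]
      calc q a * Real.log (r a / q a) ≤ q a * (r a / q a - 1) :=
            mul_le_mul_of_nonneg_left h2 h.le
        _ = r a - q a := by field_simp
  have hsum := Finset.sum_le_sum (fun a (_ : a ∈ Finset.univ) => key a)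
  rw [Finset.sum_sub_distrib] at hsum
  have heq : ∑ a, (r a - q a) / Real.log 2 = (∑ a, r a - 1) / Real.log 2 := by
    rw [← Finset.sum_div, Finset.sum_sub_distrib, hq1]
  rw [heq] at hsum
  have hle : (∑ a, r a - 1) / Real.log 2 ≤ 0 :=
    div_nonpos_of_nonpos_of_nonneg (by linarith) hlog2.le
  linarith

lemma card_filter_len (T : Finset (List Bool)) (ℓ : ℕ) :
    (T.filter (fun s => s.length = ℓ)).card ≤ 2 ^ ℓ := by
  have h := Finset.card_le_card_of_injOn
    (f := fun (s : List Bool) => (fun i : Fin ℓ => s.getD i false))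
    (s := T.filter (fun s => s.length = ℓ)) (t := (Finset.univ : Finset (Fin ℓ → Bool)))
    (fun a _ => Finset.mem_univ _) ?_
  · simpa using h
  · intro s hs t ht hst
    simp only [Finset.coe_filter, Set.mem_setOf_eq] at hs ht
    apply List.ext_get (hs.2.trans ht.2.symm)
    intro m h1 h2
    have hm : m < ℓ := hs.2 ▸ h1
    have := congrFun hst ⟨m, hm⟩
    simp only [List.getD_eq_getElem?_getD, List.getElem?_eq_getElem, h1, h2,
      Option.getD_some] at this
    simpa using this

lemma sum_pow_len_le {S : Type*} [Fintype S] (Φ : S → List Bool)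
    (hΦ : Function.Injective Φ) (θ : ℝ) (h0 : 0 ≤ θ) (h1 : θ < 1) :
    (1 - θ) * ∑ x : S, (θ/2) ^ (Φ x).length ≤ 1 := by
  classical
  set T := Finset.image Φ Finset.univ with hT
  have e1 : ∑ x : S, (θ/2:ℝ) ^ (Φ x).length = ∑ s ∈ T, (θ/2:ℝ) ^ s.length := by
    rw [hT, Finset.sum_image (fun x _ y _ h => hΦ h)]
  set N := T.sup List.length with hN
  have e2 : ∑ s ∈ T, (θ/2:ℝ) ^ s.length
      = ∑ ℓ ∈ Finset.range (N+1), ∑ s ∈ T.filter (fun s => s.length = ℓ), (θ/2:ℝ) ^ s.length :=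
    (Finset.sum_fiberwise_of_maps_to
      (fun s hs => Finset.mem_range.2 (Nat.lt_succ_of_le (Finset.le_sup hs))) _).symm
  have e3 : ∀ ℓ, ∑ s ∈ T.filter (fun s => s.length = ℓ), (θ/2:ℝ) ^ s.length
      ≤ (2:ℝ)^ℓ * (θ/2)^ℓ := by
    intro ℓ
    calc ∑ s ∈ T.filter (fun s => s.length = ℓ), (θ/2:ℝ) ^ s.length
        = ∑ s ∈ T.filter (fun s => s.length = ℓ), (θ/2:ℝ) ^ ℓ := by
          apply Finset.sum_congr rfl
          intro s hs
          rw [(Finset.mem_filter.1 hs).2]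
      _ = ((T.filter (fun s => s.length = ℓ)).card : ℝ) * (θ/2)^ℓ := by
          rw [Finset.sum_const, nsmul_eq_mul]
      _ ≤ (2:ℝ)^ℓ * (θ/2)^ℓ := by
          apply mul_le_mul_of_nonneg_right _ (by positivity)
          calc ((T.filter (fun s => s.length = ℓ)).card : ℝ)
              ≤ ((2^ℓ : ℕ) : ℝ) := by exact_mod_cast card_filter_len T ℓ
            _ = (2:ℝ)^ℓ := by push_cast; ring
  have e4 : ∀ ℓ : ℕ, (2:ℝ)^ℓ * (θ/2)^ℓ = θ^ℓ := by
    intro ℓ; rw [← mul_pow]; ring_nf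
  have e5 : ∑ ℓ ∈ Finset.range (N+1), (θ:ℝ)^ℓ ≤ 1/(1-θ) := by
    rw [le_div_iff₀ (by linarith : (0:ℝ) < 1 - θ)]
    nlinarith [geom_sum_mul θ (N+1), pow_nonneg h0 (N+1)]
  have : ∑ x : S, (θ/2:ℝ) ^ (Φ x).length ≤ 1/(1-θ) := by
    rw [e1, e2]
    calc ∑ ℓ ∈ Finset.range (N+1), ∑ s ∈ T.filter (fun s => s.length = ℓ), (θ/2:ℝ) ^ s.length
        ≤ ∑ ℓ ∈ Finset.range (N+1), (2:ℝ)^ℓ * (θ/2)^ℓ := Finset.sum_le_sum (fun ℓ _ => e3 ℓ)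
      _ = ∑ ℓ ∈ Finset.range (N+1), (θ:ℝ)^ℓ := Finset.sum_congr rfl (fun ℓ _ => e4 ℓ)
      _ ≤ 1/(1-θ) := e5
  calc (1-θ) * ∑ x : S, (θ/2:ℝ) ^ (Φ x).length ≤ (1-θ) * (1/(1-θ)) :=
        mul_le_mul_of_nonneg_left this (by linarith)
    _ = 1 := by rw [one_div, mul_inv_cancel₀ (by linarith)]

lemma mass_one {𝒳 : Type*} [Fintype 𝒳] (pX : 𝒳 → ℝ) (h1 : ∑ a, pX a = 1) :
    ∀ n : ℕ, ∑ y : Fin n → 𝒳, ∏ i, pX (y i) = 1 := by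
  intro n
  induction n with
  | zero => simp
  | succ m ih =>
    rw [← (Fin.consEquiv (fun _ : Fin (m+1) => 𝒳)).sum_comp]
    rw [Fintype.sum_prod_type]
    have : ∀ (a : 𝒳) (y : Fin m → 𝒳),
        ∏ i, pX ((Fin.consEquiv (fun _ : Fin (m+1) => 𝒳)) (a, y) i) = pX a * ∏ i, pX (y i) := by
      intro a y
      rw [Fin.prod_univ_succ]
      simp [Fin.consEquiv]
    simp only [this]
    rw [← Finset.sum_mul_sum]
    rw [h1, ih, mul_one]

lemma ent_add {𝒳 : Type*} [Fintype 𝒳] (pX : 𝒳 → ℝ) (hp : ∀ a, 0 ≤ pX a)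
    (h1 : ∑ a, pX a = 1) :
    ∀ n : ℕ, ∑ y : Fin n → 𝒳, (∏ i, pX (y i)) * Real.logb 2 (∏ i, pX (y i))
      = n * ∑ a, pX a * Real.logb 2 (pX a) := by
  have mul_logb : ∀ u v : ℝ, 0 ≤ u → 0 ≤ v →
      u * v * Real.logb 2 (u * v) = u * v * Real.logb 2 u + u * v * Real.logb 2 v := by
    intro u v hu hv
    rcases eq_or_lt_of_le hu with h | h
    · simp [← h]
    rcases eq_or_lt_of_le hv with h' | h'
    · simp [← h']
    rw [Real.logb_mul (ne_of_gt h) (ne_of_gt h')]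
    ring
  intro n
  induction n with
  | zero => simp
  | succ m ih =>
    rw [← (Fin.consEquiv (fun _ : Fin (m+1) => 𝒳)).sum_comp, Fintype.sum_prod_type]
    have hq : ∀ y : Fin m → 𝒳, 0 ≤ ∏ i, pX (y i) :=
      fun y => Finset.prod_nonneg (fun i _ => hp (y i))
    have hpi : ∀ (a : 𝒳) (y : Fin m → 𝒳),
        ∏ i, pX ((Fin.consEquiv (fun _ : Fin (m+1) => 𝒳)) (a, y) i) = pX a * ∏ i, pX (y i) := by
      intro a y
      rw [Fin.prod_univ_succ]
      simp [Fin.consEquiv]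
    simp only [hpi]
    have : ∀ (a : 𝒳) (y : Fin m → 𝒳),
        (pX a * ∏ i, pX (y i)) * Real.logb 2 (pX a * ∏ i, pX (y i))
        = (pX a * Real.logb 2 (pX a)) * (∏ i, pX (y i))
          + pX a * ((∏ i, pX (y i)) * Real.logb 2 (∏ i, pX (y i))) := by
      intro a y
      rw [mul_logb (pX a) (∏ i, pX (y i)) (hp a) (hq y)]
      ring
    simp only [this, Finset.sum_add_distrib, ← Finset.mul_sum, ← Finset.sum_mul]
    rw [mass_one pX h1 m, ih, h1]
    push_cast
    ring

lemma master {S : Type*} [Fintype S] (q : S → ℝ) (hq : ∀ x, 0 ≤ q x)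
    (hq1 : ∑ x, q x = 1) (Φ : S → List Bool) (hΦ : Function.Injective Φ)
    (θ : ℝ) (h0 : 0 < θ) (h1 : θ < 1) :
    -∑ x, q x * Real.logb 2 (q x)
      ≤ -Real.logb 2 (1-θ) + (1 - Real.logb 2 θ) * ∑ x, q x * ((Φ x).length : ℝ) := by
  have hr : ∀ x : S, 0 < (1-θ) * (θ/2) ^ (Φ x).length := by
    intro x; exact mul_pos (by linarith) (pow_pos (by linarith) _)
  have hr1 : ∑ x : S, (1-θ) * (θ/2) ^ (Φ x).length ≤ 1 := by
    rw [← Finset.mul_sum]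
    exact sum_pow_len_le Φ hΦ θ h0.le h1
  have hG := gibbs_aux q (fun x => (1-θ) * (θ/2) ^ (Φ x).length) hq hr hq1 hr1
  refine hG.trans (le_of_eq ?_)
  have hlogr : ∀ x : S, Real.logb 2 ((1-θ) * (θ/2) ^ (Φ x).length)
      = Real.logb 2 (1-θ) + ((Φ x).length : ℝ) * (Real.logb 2 θ - 1) := by
    intro x
    rw [Real.logb_mul (by linarith) (by positivity), Real.logb_pow,
      Real.logb_div (ne_of_gt h0) two_ne_zero, Real.logb_self_eq_one one_lt_two]
  simp only [hlogr]
  have : ∀ x : S, q x * (Real.logb 2 (1-θ) + ((Φ x).length : ℝ) * (Real.logb 2 θ - 1))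
      = q x * Real.logb 2 (1-θ) + (Real.logb 2 θ - 1) * (q x * ((Φ x).length : ℝ)) := by
    intro x; ring
  simp only [this, Finset.sum_add_distrib, ← Finset.sum_mul, ← Finset.mul_sum, hq1]
  ring

/-- For an i.i.d. source `p_X` on a finite alphabet and an injective binary code
`Φ` on `𝒳ⁿ`, if the expected codeword length is less than `n·log₂|𝒳|`, then it is
at least `n·H(X) − log₂ n − log₂(e·log₂|𝒳|)`. -/
theorem stmt_9 {𝒳 : Type*} [Fintype 𝒳] [DecidableEq 𝒳] [Nonempty 𝒳] (n : ℕ) (hn : 0 < n)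
    (pX : 𝒳 → ℝ) (hp : ∀ a, 0 ≤ pX a) (h1 : ∑ a, pX a = 1)
    (Φ : (Fin n → 𝒳) → List Bool) (hΦ : Function.Injective Φ)
    (hE : ∑ x, (∏ i, pX (x i)) * ((Φ x).length : ℝ)
            < n * Real.logb 2 (Fintype.card 𝒳)) :
    ∑ x, (∏ i, pX (x i)) * ((Φ x).length : ℝ) ≥
      n * (-∑ a, pX a * Real.logb 2 (pX a)) - Real.logb 2 n
        - Real.logb 2 (Real.exp 1 * Real.logb 2 (Fintype.card 𝒳)) := by
  classical
  set q : (Fin n → 𝒳) → ℝ := fun x => ∏ i, pX (x i) with hqdef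
  set μ : ℝ := ∑ x, q x * ((Φ x).length : ℝ) with hμdef
  have hq0 : ∀ x, 0 ≤ q x := fun x => Finset.prod_nonneg (fun i _ => hp (x i))
  have hq1 : ∑ x, q x = 1 := mass_one pX h1 n
  have hμ0 : 0 ≤ μ := Finset.sum_nonneg (fun x _ => mul_nonneg (hq0 x) (Nat.cast_nonneg _))
  set K : ℕ := Fintype.card 𝒳 with hKdef
  set lgK : ℝ := Real.logb 2 (K : ℝ) with hlgKdef
  set M : ℝ := n * lgK with hMdef
  -- K ≥ 2
  have hK1 : 1 ≤ K := Fintype.card_pos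
  have hK2 : 2 ≤ K := by
    by_contra h
    have hK1' : K = 1 := le_antisymm (by omega) hK1
    have hlg0 : lgK = 0 := by rw [hlgKdef, hK1']; simp
    have : M = 0 := by rw [hMdef, hlg0]; ring
    linarith
  have hlgK1 : 1 ≤ lgK := by
    rw [hlgKdef]
    calc (1:ℝ) = Real.logb 2 2 := (Real.logb_self_eq_one one_lt_two).symm
      _ ≤ Real.logb 2 (K:ℝ) := by
        rw [Real.logb_le_logb one_lt_two two_pos (by positivity)]
        exact_mod_cast hK2
  have hn1 : (1:ℝ) ≤ (n:ℝ) := by exact_mod_cast hn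
  have hM1 : 1 ≤ M := by
    rw [hMdef]; nlinarith
  -- entropy of q equals n * H
  have hHn : -∑ x, q x * Real.logb 2 (q x) = n * (-∑ a, pX a * Real.logb 2 (pX a)) := by
    rw [hqdef]
    simp only [ent_add pX hp h1 n]
    ring
  -- n * H ≤ M : via uniform Gibbs
  have hHle : n * (-∑ a, pX a * Real.logb 2 (pX a)) ≤ M := by
    rw [← hHn]
    have hKpos : (0:ℝ) < (K:ℝ) := by positivity
    have hcard : (Fintype.card (Fin n → 𝒳) : ℝ) = (K:ℝ)^n := by
      rw [hKdef]; push_cast [Fintype.card_fun]; simp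
    have hG := gibbs_aux q (fun _ => ((K:ℝ)^n)⁻¹) hq0
      (fun _ => by positivity) hq1 ?_
    · refine hG.trans (le_of_eq ?_)
      simp only [Real.logb_inv, ← Finset.sum_mul, hq1]
      rw [hMdef, hlgKdef, ← Real.logb_pow]
      push_cast
      ring
    · simp only [Finset.sum_const, nsmul_eq_mul]
      have hcu : ((Finset.univ : Finset (Fin n → 𝒳)).card : ℝ) = (K:ℝ)^n := by
        rw [Finset.card_univ]; exact hcard
      rw [hcu, mul_inv_cancel₀ (by positivity)]
  -- D = logb 2 (e * M)
  set D : ℝ := Real.logb 2 (n:ℝ) + Real.logb 2 (Real.exp 1 * lgK) with hDdef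
  have hepos : (0:ℝ) < Real.exp 1 := Real.exp_pos 1
  have hD : D = Real.logb 2 (Real.exp 1 * M) := by
    rw [hDdef, ← Real.logb_mul (by positivity) (by positivity), hMdef]
    ring_nf
  have he2 : (2:ℝ) ≤ Real.exp 1 := by
    have := Real.add_one_le_exp 1; linarith
  have hD1 : 1 ≤ D := by
    rw [hD]
    calc (1:ℝ) = Real.logb 2 2 := (Real.logb_self_eq_one one_lt_two).symm
      _ ≤ Real.logb 2 (Real.exp 1 * M) := by
        rw [Real.logb_le_logb one_lt_two two_pos (by positivity)]
        nlinarith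
  rw [ge_iff_le, sub_sub, ← hDdef]
  -- case split
  rcases le_or_gt (M - 1) μ with hcase | hcase
  · linarith
  · -- μ < M - 1
    set m : ℝ := M - 1 with hmdef
    have hm0 : 0 < m := by linarith
    have hμm : μ ≤ m := hcase.le
    set θ : ℝ := m / (m+1) with hθdef
    have hθ0 : 0 < θ := by rw [hθdef]; positivity
    have hθ1 : θ < 1 := by rw [hθdef, div_lt_one (by linarith)]; linarith
    have hmas := master q hq0 hq1 Φ hΦ θ hθ0 hθ1
    rw [hHn] at hmas
    have h1θ : 1 - θ = 1/(m+1) := by rw [hθdef]; field_simp; ring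
    have hlog1θ : -Real.logb 2 (1-θ) = Real.logb 2 (m+1) := by
      rw [h1θ, one_div, Real.logb_inv]; ring
    have hlogθ : -Real.logb 2 θ = Real.logb 2 (m+1) - Real.logb 2 m := by
      rw [hθdef, Real.logb_div (by linarith) (by linarith)]; ring
    -- bound m * (-logb 2 θ) ≤ logb 2 e
    have hlog2pos : (0:ℝ) < Real.log 2 := Real.log_pos one_lt_two
    have hloge : Real.logb 2 (Real.exp 1) = 1 / Real.log 2 := by
      rw [Real.logb, Real.log_exp]
    have key : m * (-Real.logb 2 θ) ≤ Real.logb 2 (Real.exp 1) := by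
      rw [hloge, hθdef]
      have : -Real.logb 2 (m/(m+1)) = Real.log ((m+1)/m) / Real.log 2 := by
        rw [Real.logb_div (by linarith) (by linarith), Real.logb, Real.logb]
        rw [Real.log_div (by linarith) (by linarith)]
        ring
      rw [this]
      have hl : Real.log ((m+1)/m) ≤ 1/m := by
        have := Real.log_le_sub_one_of_pos (show (0:ℝ) < (m+1)/m by positivity)
        have heq : (m+1)/m - 1 = 1/m := by field_simp; ring
        linarith [heq ▸ this]
      have h2 : m * Real.log ((m+1)/m) ≤ 1 := by
        calc m * Real.log ((m+1)/m) ≤ m * (1/m) := mul_le_mul_of_nonneg_left hl hm0.le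
          _ = 1 := by field_simp
      rw [mul_div_assoc', div_le_div_iff_of_pos_right hlog2pos]
      exact h2
    have hθneg : 0 ≤ -Real.logb 2 θ := by
      have : Real.logb 2 θ ≤ 0 := Real.logb_nonpos one_lt_two hθ0.le hθ1.le
      linarith
    -- combine
    have hmain : n * (-∑ a, pX a * Real.logb 2 (pX a)) ≤ μ + D := by
      have step1 : (1 - Real.logb 2 θ) * μ ≤ μ + m * (-Real.logb 2 θ) := by
        have := mul_le_mul_of_nonneg_left hμm hθneg
        nlinarith
      have step2 : n * (-∑ a, pX a * Real.logb 2 (pX a))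
          ≤ Real.logb 2 (m+1) + μ + m * (-Real.logb 2 θ) := by
        calc n * (-∑ a, pX a * Real.logb 2 (pX a))
            ≤ -Real.logb 2 (1-θ) + (1 - Real.logb 2 θ) * μ := hmas
          _ = Real.logb 2 (m+1) + (1 - Real.logb 2 θ) * μ := by rw [hlog1θ]
          _ ≤ Real.logb 2 (m+1) + (μ + m * (-Real.logb 2 θ)) := by linarith
          _ = Real.logb 2 (m+1) + μ + m * (-Real.logb 2 θ) := by ring
      have hm1M : m + 1 = M := by rw [hmdef]; ring
      have hDe : D = Real.logb 2 (m+1) + Real.logb 2 (Real.exp 1) := by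
        rw [hD, hm1M, Real.logb_mul (by positivity) (by linarith), add_comm]
      linarith [key, step2]
    linarith
end

section
/- For R ≥ 0 and a probability distribution p_K on a finite set X, define F(R|p_K) = min over all distributions P on X of ( max{H(P) − R, 0} + D(P‖p_K) ). Then F(R|p_K) > 0 if and only if R < H(p_K). -/
/-- Base-2 Shannon entropy of a distribution on a finite set. -/
noncomputable def ent {𝒳 : Type*} [Fintype 𝒳] (P : 𝒳 → ℝ) : ℝ :=
  -∑ x, P x * Real.logb 2 (P x)

/-- Base-2 relative entropy (Kullback–Leibler divergence). -/
noncomputable def KL {𝒳 : Type*} [Fintype 𝒳] (P Q : 𝒳 → ℝ) : ℝ :=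
  ∑ x, P x * Real.logb 2 (P x / Q x)

lemma gibbs_term {p q : ℝ} (hp : 0 ≤ p) (hq : 0 < q) :
    p - q ≤ p * Real.log (p / q) ∧ (p ≠ q → p - q < p * Real.log (p / q)) := by
  rcases eq_or_lt_of_le hp with h0 | h0
  · constructor
    · simp [← h0]; linarith
    · intro _; simp [← h0]; linarith
  · have hkey : Real.log (q / p) ≤ q / p - 1 := Real.log_le_sub_one_of_pos (by positivity)
    have h2 : Real.log (p / q) = - Real.log (q / p) := by
      rw [← Real.log_inv, inv_div]
    have h3 : p * (q / p - 1) = q - p := by field_simp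
    constructor
    · have := mul_le_mul_of_nonneg_left hkey hp
      rw [h3] at this
      nlinarith [this]
    · intro hne
      have hne' : q / p ≠ 1 := by
        intro h
        apply hne
        field_simp at h
        linarith
      have hkey' : Real.log (q / p) < q / p - 1 :=
        Real.log_lt_sub_one_of_pos (by positivity) hne'
      have := mul_lt_mul_of_pos_left hkey' h0
      rw [h3] at this
      nlinarith [this]

lemma gibbs_sum {𝒳 : Type*} [Fintype 𝒳] {P Q : 𝒳 → ℝ}
    (hP : ∀ x, 0 ≤ P x) (hQ : ∀ x, 0 < Q x) (hPs : ∑ x, P x = 1) (hQs : ∑ x, Q x = 1) :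
    0 ≤ ∑ x, P x * Real.log (P x / Q x) ∧
    (P ≠ Q → 0 < ∑ x, P x * Real.log (P x / Q x)) := by
  have hdiff : ∑ x, (P x - Q x) = 0 := by
    rw [Finset.sum_sub_distrib, hPs, hQs]; ring
  constructor
  · have hle : ∑ x, (P x - Q x) ≤ ∑ x, P x * Real.log (P x / Q x) :=
      Finset.sum_le_sum fun x _ => (gibbs_term (hP x) (hQ x)).1
    linarith
  · intro hne
    obtain ⟨x₀, hx₀⟩ : ∃ x, P x ≠ Q x := by
      by_contra h
      push_neg at h
      exact hne (funext h)
    have hlt : ∑ x, (P x - Q x) < ∑ x, P x * Real.log (P x / Q x) :=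
      Finset.sum_lt_sum (fun x _ => (gibbs_term (hP x) (hQ x)).1)
        ⟨x₀, Finset.mem_univ x₀, (gibbs_term (hP x₀) (hQ x₀)).2 hx₀⟩
    linarith

lemma KL_eq_form {𝒳 : Type*} [Fintype 𝒳] (P Q : 𝒳 → ℝ) :
    KL P Q = (∑ x, P x * Real.log (P x / Q x)) / Real.log 2 := by
  unfold KL
  rw [Finset.sum_div]
  congr 1; funext x
  rw [Real.logb, mul_div_assoc]

lemma ent_eq_form {𝒳 : Type*} [Fintype 𝒳] (P : 𝒳 → ℝ) :
    ent P = (-∑ x, P x * Real.log (P x)) / Real.log 2 := by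
  unfold ent
  rw [neg_div, Finset.sum_div]
  congr 2; funext x
  rw [Real.logb, mul_div_assoc]

lemma KL_nonneg {𝒳 : Type*} [Fintype 𝒳] {P Q : 𝒳 → ℝ}
    (hP : ∀ x, 0 ≤ P x) (hQ : ∀ x, 0 < Q x) (hPs : ∑ x, P x = 1) (hQs : ∑ x, Q x = 1) :
    0 ≤ KL P Q := by
  rw [KL_eq_form]
  have := (gibbs_sum hP hQ hPs hQs).1
  have h2 : (0:ℝ) < Real.log 2 := Real.log_pos (by norm_num)
  positivity

lemma KL_pos {𝒳 : Type*} [Fintype 𝒳] {P Q : 𝒳 → ℝ}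
    (hP : ∀ x, 0 ≤ P x) (hQ : ∀ x, 0 < Q x) (hPs : ∑ x, P x = 1) (hQs : ∑ x, Q x = 1)
    (hne : P ≠ Q) : 0 < KL P Q := by
  rw [KL_eq_form]
  have := (gibbs_sum hP hQ hPs hQs).2 hne
  have h2 : (0:ℝ) < Real.log 2 := Real.log_pos (by norm_num)
  positivity

lemma KL_self {𝒳 : Type*} [Fintype 𝒳] {Q : 𝒳 → ℝ} (hQ : ∀ x, 0 < Q x) : KL Q Q = 0 := by
  unfold KL
  apply Finset.sum_eq_zero
  intro x _
  rw [div_self (hQ x).ne', Real.logb_one, mul_zero]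

/-- `F(R|p_K) = min_P ([H(P)−R]⁺ + D(P‖p_K))` is positive iff `R < H(p_K)`. -/
theorem stmt_11 {𝒳 : Type*} [Fintype 𝒳] [Nonempty 𝒳]
    (pK : 𝒳 → ℝ) (hpos : ∀ x, 0 < pK x) (h1 : ∑ x, pK x = 1)
    (R : ℝ) (hR : 0 ≤ R) :
    0 < sInf {d : ℝ | ∃ P : 𝒳 → ℝ,
        (∀ x, 0 ≤ P x) ∧ ∑ x, P x = 1 ∧ d = max (ent P - R) 0 + KL P pK}
      ↔ R < ent pK := by
  set S := {d : ℝ | ∃ P : 𝒳 → ℝ,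
      (∀ x, 0 ≤ P x) ∧ ∑ x, P x = 1 ∧ d = max (ent P - R) 0 + KL P pK} with hS
  set f : (𝒳 → ℝ) → ℝ := fun P => max (ent P - R) 0 + KL P pK with hf
  have hSne : S.Nonempty := ⟨f pK, pK, fun x => (hpos x).le, h1, rfl⟩
  have hbdd : BddBelow S := by
    refine ⟨0, fun d hd => ?_⟩
    obtain ⟨P, hP0, hP1, rfl⟩ := hd
    have := KL_nonneg hP0 hpos hP1 h1
    positivity
  constructor
  · -- 0 < sInf S → R < ent pK
    intro hsinf
    by_contra hcon
    push_neg at hcon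
    have h0mem : (0:ℝ) ∈ S := by
      refine ⟨pK, fun x => (hpos x).le, h1, ?_⟩
      rw [KL_self hpos, add_zero, max_eq_right (by linarith)]
    have := csInf_le hbdd h0mem
    linarith
  · -- R < ent pK → 0 < sInf S
    intro hRlt
    -- continuity of f
    have hfc : Continuous f := by
      have hlog2 : Continuous fun _ : (𝒳 → ℝ) => Real.log 2 := continuous_const
      have hent : Continuous fun P : 𝒳 → ℝ => ent P := by
        simp_rw [ent_eq_form]
        exact ((continuous_finset_sum _ fun x _ =>
          Real.continuous_mul_log.comp (continuous_apply x)).neg).div_const _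
      have hkl : Continuous fun P : 𝒳 → ℝ => KL P pK := by
        have heq : ∀ P : 𝒳 → ℝ, KL P pK =
            (∑ x, (P x * Real.log (P x) - P x * Real.log (pK x))) / Real.log 2 := by
          intro P
          rw [KL_eq_form]
          congr 1
          apply Finset.sum_congr rfl
          intro x _
          rcases eq_or_ne (P x) 0 with h | h
          · simp [h]
          · rw [Real.log_div h (hpos x).ne', mul_sub]
        simp_rw [heq]
        exact (continuous_finset_sum _ fun x _ =>
          ((Real.continuous_mul_log.comp (continuous_apply x)).sub
            ((continuous_apply x).mul continuous_const))).div_const _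
      exact ((hent.sub continuous_const).max continuous_const).add hkl
    -- minimizer over the simplex
    obtain ⟨P₀, hP₀mem, hP₀min⟩ :=
      (isCompact_stdSimplex ℝ 𝒳).exists_isMinOn ⟨pK, fun x => (hpos x).le, h1⟩
        hfc.continuousOn
    obtain ⟨hP₀0, hP₀1⟩ := hP₀mem
    have hfP₀pos : 0 < f P₀ := by
      rcases eq_or_ne P₀ pK with rfl | hne
      · have : 0 < ent P₀ - R := by linarith
        have := KL_nonneg hP₀0 hpos hP₀1 h1
        have hmax : 0 < max (ent P₀ - R) 0 := lt_max_of_lt_left ‹0 < ent P₀ - R›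
        simp only [hf]
        linarith
      · have := KL_pos hP₀0 hpos hP₀1 h1 hne
        have hmax : (0:ℝ) ≤ max (ent P₀ - R) 0 := le_max_right _ _
        simp only [hf]
        linarith
    have hlb : ∀ d ∈ S, f P₀ ≤ d := by
      intro d hd
      obtain ⟨P, hP0', hP1', rfl⟩ := hd
      exact hP₀min ⟨hP0', hP1'⟩
    calc (0:ℝ) < f P₀ := hfP₀pos
      _ ≤ sInf S := le_csInf hSne hlb
end

section
/- For a finite alphabet X, there exists a sequence of subsets C^n(R) ⊆ X^n (n = 1, 2, ...), not depending on the source distribution, such that |C^n(R)| ≤ (n+1)^{|X|}·2^{nR} and for every distribution p_X on X, Pr{X^n ∉ C^n(R)} ≤ (n+1)^{|X|}·2^{−n·E(R|p_X)}, where X^n is i.i.d. ~ p_X and E(R|p_X) = min_{P : H(P) ≥ R} D(P‖p_X). -/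
/-- The exponent `E(R|p_X) = min_{P : H(P) ≥ R} D(P‖p_X)`. -/
noncomputable def Eexp {𝒳 : Type*} [Fintype 𝒳] (R : ℝ) (pX : 𝒳 → ℝ) : ℝ :=
  sInf {d : ℝ | ∃ P : 𝒳 → ℝ,
    (∀ x, 0 ≤ P x) ∧ ∑ x, P x = 1 ∧ R ≤ ent P ∧ d = KL P pX}

set_option linter.unusedSectionVars false

namespace Stmt16

open Finset Real

variable {𝒳 : Type*} [Fintype 𝒳] [DecidableEq 𝒳]

/-- The count (unnormalized type) of a sequence. -/
def cnt {n : ℕ} (x : Fin n → 𝒳) (a : 𝒳) : ℕ := (Finset.univ.filter fun i => x i = a).card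

lemma cnt_le {n : ℕ} (x : Fin n → 𝒳) (a : 𝒳) : cnt x a ≤ n := by
  simpa [cnt] using (Finset.card_filter_le Finset.univ fun i => x i = a)

lemma sum_cnt {n : ℕ} (x : Fin n → 𝒳) : ∑ a, cnt x a = n := by
  have := Finset.card_eq_sum_card_fiberwise
    (f := x) (s := (Finset.univ : Finset (Fin n))) (t := Finset.univ)
    (fun i _ => Finset.mem_univ (x i))
  simpa [cnt] using this.symm

lemma prod_comp_cnt {n : ℕ} (x : Fin n → 𝒳) (f : 𝒳 → ℝ) :
    ∏ i, f (x i) = ∏ a, f a ^ cnt x a := by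
  rw [← Finset.prod_fiberwise_of_maps_to (fun i _ => Finset.mem_univ (x i)) (fun i => f (x i))]
  refine Finset.prod_congr rfl fun a _ => ?_
  rw [cnt, ← Finset.prod_const]
  exact Finset.prod_congr rfl fun i hi => by rw [(Finset.mem_filter.1 hi).2]

/-- Empirical distribution. -/
noncomputable def emp {n : ℕ} (x : Fin n → 𝒳) (a : 𝒳) : ℝ := (cnt x a : ℝ) / n

lemma emp_nonneg {n : ℕ} (x : Fin n → 𝒳) (a : 𝒳) : 0 ≤ emp x a :=
  div_nonneg (Nat.cast_nonneg _) (Nat.cast_nonneg _)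

lemma cnt_cast {n : ℕ} (x : Fin n → 𝒳) (a : 𝒳) : (cnt x a : ℝ) = n * emp x a := by
  rcases Nat.eq_zero_or_pos n with h | h
  · subst h
    have : cnt x a = 0 := Nat.le_zero.mp (cnt_le x a)
    simp [this, emp]
  · rw [emp]
    field_simp

lemma sum_emp {n : ℕ} (hn : n ≠ 0) (x : Fin n → 𝒳) : ∑ a, emp x a = 1 := by
  have h : (∑ a, (cnt x a : ℝ)) = n := by exact_mod_cast congrArg (Nat.cast : ℕ → ℝ) (sum_cnt x)
  have hn' : (n : ℝ) ≠ 0 := Nat.cast_ne_zero.mpr hn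
  simp only [emp, ← Finset.sum_div, h]
  field_simp


lemma two_rpow_sum (F : 𝒳 → ℝ) : (2:ℝ) ^ (∑ a, F a) = ∏ a, (2:ℝ) ^ F a := by
  rw [Real.rpow_def_of_pos two_pos, Finset.mul_sum, Real.exp_sum]
  exact Finset.prod_congr rfl fun a _ => (Real.rpow_def_of_pos two_pos _).symm

lemma pow_cnt_eq_rpow {n : ℕ} (x : Fin n → 𝒳) (q : 𝒳 → ℝ)
    (hq : ∀ a, cnt x a ≠ 0 → 0 < q a) :
    ∏ a, q a ^ cnt x a = (2:ℝ) ^ (∑ a, (cnt x a : ℝ) * Real.logb 2 (q a)) := by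
  rw [two_rpow_sum]
  refine Finset.prod_congr rfl fun a _ => ?_
  rcases Nat.eq_zero_or_pos (cnt x a) with h | h
  · simp [h]
  · have hqa : 0 < q a := hq a h.ne'
    have hlog : q a = (2:ℝ) ^ Real.logb 2 (q a) :=
      (Real.rpow_logb two_pos (by norm_num) hqa).symm
    rw [← Real.rpow_natCast (q a) (cnt x a)]
    conv_lhs => rw [hlog]
    rw [← Real.rpow_mul (by norm_num), mul_comm]

lemma emp_pos_of_cnt {n : ℕ} (x : Fin n → 𝒳) (a : 𝒳) (h : cnt x a ≠ 0) : 0 < emp x a := by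
  have hn : 0 < n := by
    rcases Nat.eq_zero_or_pos n with h0 | h0
    · exact absurd (Nat.le_zero.mp (h0 ▸ cnt_le x a)) h
    · exact h0
  exact div_pos (by exact_mod_cast Nat.pos_of_ne_zero h) (by exact_mod_cast hn)

/-- Sum identity: `∑ cnt · logb (emp) = -(n · H(emp))`. -/
lemma sum_cnt_logb_emp {n : ℕ} (x : Fin n → 𝒳) :
    ∑ a, (cnt x a : ℝ) * Real.logb 2 (emp x a) = -((n:ℝ) * ent (emp x)) := by
  rw [ent, mul_neg, neg_neg, Finset.mul_sum]
  exact Finset.sum_congr rfl fun a _ => by rw [cnt_cast, mul_assoc]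

lemma KL_emp {n : ℕ} (x : Fin n → 𝒳) (pX : 𝒳 → ℝ) (hpX : ∀ a, 0 < pX a) :
    ∑ a, (cnt x a : ℝ) * Real.logb 2 (pX a)
      = -((n:ℝ) * (ent (emp x) + KL (emp x) pX)) := by
  have hKL : KL (emp x) pX
      = ∑ a, emp x a * Real.logb 2 (emp x a) - ∑ a, emp x a * Real.logb 2 (pX a) := by
    rw [KL, ← Finset.sum_sub_distrib]
    refine Finset.sum_congr rfl fun a _ => ?_
    rcases eq_or_lt_of_le (emp_nonneg x a) with h | h
    · simp [← h]
    · rw [Real.logb_div h.ne' (hpX a).ne', mul_sub]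
  have hent : ent (emp x) = -∑ a, emp x a * Real.logb 2 (emp x a) := rfl
  have : ∑ a, (cnt x a : ℝ) * Real.logb 2 (pX a) = (n:ℝ) * ∑ a, emp x a * Real.logb 2 (pX a) := by
    rw [Finset.mul_sum]
    exact Finset.sum_congr rfl fun a _ => by rw [cnt_cast, mul_assoc]
  rw [this, hKL, hent]
  ring


/-- The type class of `x0`. -/
def Tc {n : ℕ} (x0 : Fin n → 𝒳) : Finset (Fin n → 𝒳) :=
  Finset.univ.filter fun x => cnt x = cnt x0

lemma prod_emp_self {n : ℕ} (x0 : Fin n → 𝒳) {x : Fin n → 𝒳} (hx : x ∈ Tc x0) :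
    ∏ i, emp x0 (x i) = (2:ℝ) ^ (-((n:ℝ) * ent (emp x0))) := by
  have hc : cnt x = cnt x0 := (Finset.mem_filter.1 hx).2
  rw [prod_comp_cnt, show (fun a => emp x0 a ^ cnt x a) = fun a => emp x0 a ^ cnt x0 a by
    funext a; rw [hc]]
  rw [pow_cnt_eq_rpow x0 (emp x0) (emp_pos_of_cnt x0), sum_cnt_logb_emp]

lemma card_Tc_le {n : ℕ} (x0 : Fin n → 𝒳) :
    ((Tc x0).card : ℝ) ≤ (2:ℝ) ^ ((n:ℝ) * ent (emp x0)) := by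
  have key : ((Tc x0).card : ℝ) * (2:ℝ) ^ (-((n:ℝ) * ent (emp x0))) ≤ 1 := by
    have h1 : (∑ x ∈ Tc x0, ∏ i, emp x0 (x i))
        = ((Tc x0).card : ℝ) * (2:ℝ) ^ (-((n:ℝ) * ent (emp x0))) := by
      rw [Finset.sum_congr rfl (fun x hx => prod_emp_self x0 hx), Finset.sum_const,
        nsmul_eq_mul]
    have h2 : (∑ x ∈ Tc x0, ∏ i, emp x0 (x i)) ≤ ∑ x : Fin n → 𝒳, ∏ i, emp x0 (x i) :=
      Finset.sum_le_sum_of_subset_of_nonneg (Finset.subset_univ _)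
        (fun x _ _ => Finset.prod_nonneg fun i _ => emp_nonneg x0 (x i))
    have h3 : (∑ x : Fin n → 𝒳, ∏ i, emp x0 (x i)) = (∑ a, emp x0 a) ^ n := by
      rw [← Fin.prod_const n (∑ a, emp x0 a), Finset.prod_univ_sum]
      rw [← Fintype.piFinset_univ]
    have h4 : ((∑ a, emp x0 a) : ℝ) ^ n = 1 := by
      rcases Nat.eq_zero_or_pos n with h | h
      · simp [h]
      · rw [sum_emp h.ne' x0, one_pow]
    rw [← h1]; rw [h3, h4] at h2; exact h2
  have hpos : (0:ℝ) < (2:ℝ) ^ ((n:ℝ) * ent (emp x0)) := Real.rpow_pos_of_pos two_pos _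
  calc ((Tc x0).card : ℝ)
      = ((Tc x0).card : ℝ) * (2:ℝ) ^ (-((n:ℝ) * ent (emp x0)))
          * (2:ℝ) ^ ((n:ℝ) * ent (emp x0)) := by
        rw [mul_assoc, ← Real.rpow_add two_pos]; simp
    _ ≤ 1 * (2:ℝ) ^ ((n:ℝ) * ent (emp x0)) := mul_le_mul_of_nonneg_right key hpos.le
    _ = _ := one_mul _

lemma prod_pX_eq {n : ℕ} (x0 : Fin n → 𝒳) {x : Fin n → 𝒳} (hx : x ∈ Tc x0)
    (pX : 𝒳 → ℝ) (hpX : ∀ a, 0 < pX a) :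
    ∏ i, pX (x i) = (2:ℝ) ^ (-((n:ℝ) * (ent (emp x0) + KL (emp x0) pX))) := by
  have hc : cnt x = cnt x0 := (Finset.mem_filter.1 hx).2
  rw [prod_comp_cnt, show (fun a => pX a ^ cnt x a) = fun a => pX a ^ cnt x0 a by
    funext a; rw [hc]]
  rw [pow_cnt_eq_rpow x0 pX (fun a _ => hpX a), KL_emp x0 pX hpX]

lemma sum_Tc_pX_le {n : ℕ} (x0 : Fin n → 𝒳) (pX : 𝒳 → ℝ) (hpX : ∀ a, 0 < pX a) :
    ∑ x ∈ Tc x0, ∏ i, pX (x i) ≤ (2:ℝ) ^ (-((n:ℝ) * KL (emp x0) pX)) := by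
  have h1 : (∑ x ∈ Tc x0, ∏ i, pX (x i))
      = ((Tc x0).card : ℝ) * (2:ℝ) ^ (-((n:ℝ) * (ent (emp x0) + KL (emp x0) pX))) := by
    rw [Finset.sum_congr rfl (fun x hx => prod_pX_eq x0 hx pX hpX), Finset.sum_const,
      nsmul_eq_mul]
  rw [h1]
  calc ((Tc x0).card : ℝ) * (2:ℝ) ^ (-((n:ℝ) * (ent (emp x0) + KL (emp x0) pX)))
      ≤ (2:ℝ) ^ ((n:ℝ) * ent (emp x0))
          * (2:ℝ) ^ (-((n:ℝ) * (ent (emp x0) + KL (emp x0) pX))) :=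
        mul_le_mul_of_nonneg_right (card_Tc_le x0) (Real.rpow_pos_of_pos two_pos _).le
    _ = (2:ℝ) ^ (-((n:ℝ) * KL (emp x0) pX)) := by
        rw [← Real.rpow_add two_pos]; ring_nf


/-- Gibbs' inequality. -/
lemma KL_nonneg (P pX : 𝒳 → ℝ) (hP : ∀ a, 0 ≤ P a) (hP1 : ∑ a, P a = 1)
    (hpX : ∀ a, 0 < pX a) (hpX1 : ∑ a, pX a = 1) : 0 ≤ KL P pX := by
  have key : (0:ℝ) ≤ ∑ a, P a * Real.log (P a / pX a) := by
    have h1 : ∑ a, (P a - pX a) ≤ ∑ a, P a * Real.log (P a / pX a) := by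
      refine Finset.sum_le_sum fun a _ => ?_
      rcases eq_or_lt_of_le (hP a) with h | h
      · simp [← h]
        exact (hpX a).le
      · have hlog : Real.log (pX a / P a) ≤ pX a / P a - 1 :=
          Real.log_le_sub_one_of_pos (div_pos (hpX a) h)
        have hflip : Real.log (P a / pX a) = -Real.log (pX a / P a) := by
          rw [← Real.log_inv, inv_div]
        rw [hflip]
        have := mul_le_mul_of_nonneg_left hlog (hP a)
        have h2 : P a * (pX a / P a - 1) = pX a - P a := by field_simp
        nlinarith
    have h2 : ∑ a, (P a - pX a) = 0 := by
      rw [Finset.sum_sub_distrib, hP1, hpX1, sub_self]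
    linarith
  have : KL P pX = (∑ a, P a * Real.log (P a / pX a)) / Real.log 2 := by
    rw [KL, Finset.sum_div]
    exact Finset.sum_congr rfl fun a _ => by rw [Real.logb, mul_div_assoc]
  rw [this]
  exact div_nonneg key (Real.log_nonneg one_le_two)

lemma Eexp_le (R : ℝ) (pX P : 𝒳 → ℝ) (hpX : ∀ a, 0 < pX a) (hpX1 : ∑ a, pX a = 1)
    (hP0 : ∀ a, 0 ≤ P a) (hP1 : ∑ a, P a = 1) (hent : R ≤ ent P) :
    Eexp R pX ≤ KL P pX := by
  refine csInf_le ⟨0, fun d hd => ?_⟩ ⟨P, hP0, hP1, hent, rfl⟩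
  obtain ⟨Q, hQ0, hQ1, _, rfl⟩ := hd
  exact KL_nonneg Q pX hQ0 hQ1 hpX hpX1

/-- Number of types. -/
lemma card_image_cnt (n : ℕ) (s : Finset (Fin n → 𝒳)) :
    ((s.image fun x => cnt x).card : ℝ) ≤ ((n:ℝ) + 1) ^ Fintype.card 𝒳 := by
  have h : (s.image fun x => cnt x).card ≤ (n + 1) ^ Fintype.card 𝒳 := by
    have := Finset.card_le_card_of_injOn
      (f := fun (N : 𝒳 → ℕ) (a : 𝒳) => (⟨min (N a) n, Nat.lt_succ_of_le (min_le_right _ _)⟩ : Fin (n+1)))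
      (s := s.image fun x => cnt x) (t := Finset.univ)
      (fun _ _ => Finset.mem_univ _) ?_
    · calc (s.image fun x => cnt x).card ≤ (Finset.univ : Finset (𝒳 → Fin (n+1))).card := this
        _ = (n + 1) ^ Fintype.card 𝒳 := by
          rw [Finset.card_univ, Fintype.card_fun, Fintype.card_fin]
    · intro N hN M hM hNM
      simp only [Finset.coe_image, Set.mem_image] at hN hM
      obtain ⟨x, _, rfl⟩ := hN
      obtain ⟨y, _, rfl⟩ := hM
      funext a
      have := congrFun hNM a
      have hx := cnt_le x a
      have hy := cnt_le y a
      have := congrArg Fin.val this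
      simpa [min_eq_left hx, min_eq_left hy] using this
  calc ((s.image fun x => cnt x).card : ℝ) ≤ (((n + 1) ^ Fintype.card 𝒳 : ℕ) : ℝ) := by
        exact_mod_cast h
    _ = ((n:ℝ) + 1) ^ Fintype.card 𝒳 := by push_cast; ring

end Stmt16

open Stmt16 in
/-- Universal fixed-rate source coding: there exist sets `C^n(R) ⊆ 𝒳ⁿ`, not
depending on the source distribution, with `|C^n(R)| ≤ (n+1)^{|𝒳|}·2^{nR}` and,
for every source distribution `p_X`,
`Pr{Xⁿ ∉ C^n(R)} ≤ (n+1)^{|𝒳|}·2^{−n·E(R|p_X)}`. -/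
theorem stmt_16 {𝒳 : Type*} [Fintype 𝒳] [DecidableEq 𝒳] [Nonempty 𝒳]
    (R : ℝ) (hR : 0 ≤ R) :
    ∃ C : (n : ℕ) → Finset (Fin n → 𝒳),
      (∀ n : ℕ, ((C n).card : ℝ)
          ≤ ((n : ℝ) + 1) ^ (Fintype.card 𝒳) * (2 : ℝ) ^ ((n : ℝ) * R)) ∧
      (∀ n : ℕ, ∀ pX : 𝒳 → ℝ, (∀ x, 0 < pX x) → ∑ x, pX x = 1 →
        ∑ x ∈ (C n)ᶜ, ∏ i, pX (x i)
          ≤ ((n : ℝ) + 1) ^ (Fintype.card 𝒳) * (2 : ℝ) ^ (-(n : ℝ) * Eexp R pX)) := by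
  classical
  refine ⟨fun n => Finset.univ.filter (fun x => ent (emp x) ≤ R), ?_, ?_⟩
  · -- cardinality bound
    intro n
    set C : Finset (Fin n → 𝒳) := Finset.univ.filter (fun x => ent (emp x) ≤ R) with hC
    have hgroup : C.card = ∑ N ∈ C.image (fun x => cnt x), (C.filter fun x => cnt x = N).card :=
      Finset.card_eq_sum_card_fiberwise fun x hx => Finset.mem_image_of_mem _ hx
    have hfiber : ∀ N ∈ C.image (fun x => cnt x),
        (((C.filter fun x => cnt x = N).card : ℝ)) ≤ (2:ℝ) ^ ((n:ℝ) * R) := by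
      intro N hN
      obtain ⟨x0, hx0C, rfl⟩ := Finset.mem_image.1 hN
      have hx0R : ent (emp x0) ≤ R := (Finset.mem_filter.1 hx0C).2
      have hsub : (C.filter fun x => cnt x = cnt x0) ⊆ Tc x0 := by
        intro x hx
        exact Finset.mem_filter.2 ⟨Finset.mem_univ _, (Finset.mem_filter.1 hx).2⟩
      calc (((C.filter fun x => cnt x = cnt x0).card : ℝ))
          ≤ ((Tc x0).card : ℝ) := by exact_mod_cast Finset.card_le_card hsub
        _ ≤ (2:ℝ) ^ ((n:ℝ) * ent (emp x0)) := card_Tc_le x0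
        _ ≤ (2:ℝ) ^ ((n:ℝ) * R) :=
            Real.rpow_le_rpow_of_exponent_le one_le_two
              (mul_le_mul_of_nonneg_left hx0R (Nat.cast_nonneg n))
    calc (C.card : ℝ)
        = ∑ N ∈ C.image (fun x => cnt x), (((C.filter fun x => cnt x = N).card : ℝ)) := by
          rw [hgroup]; push_cast; ring
      _ ≤ ∑ _N ∈ C.image (fun x => cnt x), (2:ℝ) ^ ((n:ℝ) * R) :=
          Finset.sum_le_sum hfiber
      _ = ((C.image (fun x => cnt x)).card : ℝ) * (2:ℝ) ^ ((n:ℝ) * R) := by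
          rw [Finset.sum_const, nsmul_eq_mul]
      _ ≤ ((n:ℝ) + 1) ^ Fintype.card 𝒳 * (2:ℝ) ^ ((n:ℝ) * R) :=
          mul_le_mul_of_nonneg_right (card_image_cnt n C) (Real.rpow_pos_of_pos two_pos _).le
  · -- probability bound
    intro n pX hpX hpX1
    set C : Finset (Fin n → 𝒳) := Finset.univ.filter (fun x => ent (emp x) ≤ R) with hC
    have hgroup : ∑ x ∈ Cᶜ, ∏ i, pX (x i)
        = ∑ N ∈ Cᶜ.image (fun x => cnt x),
            ∑ x ∈ Cᶜ.filter (fun x => cnt x = N), ∏ i, pX (x i) :=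
      (Finset.sum_fiberwise_of_maps_to (fun x hx => Finset.mem_image_of_mem _ hx) _).symm
    have hfiber : ∀ N ∈ Cᶜ.image (fun x => cnt x),
        (∑ x ∈ Cᶜ.filter (fun x => cnt x = N), ∏ i, pX (x i))
          ≤ (2:ℝ) ^ (-(n:ℝ) * Eexp R pX) := by
      intro N hN
      obtain ⟨x0, hx0D, rfl⟩ := Finset.mem_image.1 hN
      have hx0R : ¬ ent (emp x0) ≤ R := by
        have := Finset.mem_compl.1 hx0D
        simpa [hC] using this
      have hn : n ≠ 0 := by
        rintro rfl
        have h0 : ent (emp x0) = 0 := by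
          have : ∀ a, emp x0 a = 0 := fun a => by
            have : cnt x0 a = 0 := Nat.le_zero.mp (cnt_le x0 a)
            simp [emp, this]
          simp [ent, this]
        exact hx0R (h0 ▸ hR)
      have hEexp : Eexp R pX ≤ KL (emp x0) pX :=
        Eexp_le R pX (emp x0) hpX hpX1 (emp_nonneg x0) (sum_emp hn x0)
          (le_of_lt (lt_of_not_ge hx0R))
      have hsub : Cᶜ.filter (fun x => cnt x = cnt x0) ⊆ Tc x0 := by
        intro x hx
        exact Finset.mem_filter.2 ⟨Finset.mem_univ _, (Finset.mem_filter.1 hx).2⟩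
      calc (∑ x ∈ Cᶜ.filter (fun x => cnt x = cnt x0), ∏ i, pX (x i))
          ≤ ∑ x ∈ Tc x0, ∏ i, pX (x i) :=
            Finset.sum_le_sum_of_subset_of_nonneg hsub
              (fun x _ _ => Finset.prod_nonneg fun i _ => (hpX (x i)).le)
        _ ≤ (2:ℝ) ^ (-((n:ℝ) * KL (emp x0) pX)) := sum_Tc_pX_le x0 pX hpX
        _ ≤ (2:ℝ) ^ (-(n:ℝ) * Eexp R pX) := by
            apply Real.rpow_le_rpow_of_exponent_le one_le_two
            have := mul_le_mul_of_nonneg_left hEexp (Nat.cast_nonneg (α := ℝ) n)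
            linarith
    calc ∑ x ∈ Cᶜ, ∏ i, pX (x i)
        = ∑ N ∈ Cᶜ.image (fun x => cnt x),
            ∑ x ∈ Cᶜ.filter (fun x => cnt x = N), ∏ i, pX (x i) := hgroup
      _ ≤ ∑ _N ∈ Cᶜ.image (fun x => cnt x), (2:ℝ) ^ (-(n:ℝ) * Eexp R pX) :=
          Finset.sum_le_sum hfiber
      _ = ((Cᶜ.image (fun x => cnt x)).card : ℝ) * (2:ℝ) ^ (-(n:ℝ) * Eexp R pX) := by
          rw [Finset.sum_const, nsmul_eq_mul]
      _ ≤ ((n:ℝ) + 1) ^ Fintype.card 𝒳 * (2:ℝ) ^ (-(n:ℝ) * Eexp R pX) :=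
          mul_le_mul_of_nonneg_right (card_image_cnt n Cᶜ) (Real.rpow_pos_of_pos two_pos _).le
end
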